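/- Fix an integer d ≥ 3, δ ∈ (0, 2/(d−2)], β > 0, ε ∈ (0,1) with 4^{d−2} ε^{(d−2)δ} ≤ 1/2, a positive integer k, and any finite set A ⊂ ℤ^d with #A ≤ k^d. Let S_A := k^{−d} Σ_{w ∈ A} Y_{ε,w} 1_{ρ_w < T_ε}. Then there is C = C(d) such that E[ (S_A − E[ρ^{d−2}])² ] ≤ C ( E[ρ^{2(d−2)} 1_{ρ < T_ε}] + ε^{2(2/(d−2) − δ)β} ). -/

import Mathlib

open MeasureTheory ProbabilityTheory

noncomputable section

private lemma ind_mem {T : ℝ} (f : ℝ → ℝ) {x : ℝ} (h : x < T) :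
    Set.indicator {y : ℝ | y < T} f x = f x :=
  Set.indicator_of_mem (show x ∈ {y : ℝ | y < T} from h) f

private lemma ind_not_mem {T : ℝ} (f : ℝ → ℝ) {x : ℝ} (h : ¬ x < T) :
    Set.indicator {y : ℝ | y < T} f x = 0 :=
  Set.indicator_of_notMem (show x ∉ {y : ℝ | y < T} from h) f

private lemma sq_sub_le_aux (x y : ℝ) : (x - y) ^ 2 ≤ 2 * x ^ 2 + 2 * y ^ 2 := by
  nlinarith [sq_nonneg (x + y)]

private lemma sq_add_le_aux (x y : ℝ) : (x + y) ^ 2 ≤ 2 * x ^ 2 + 2 * y ^ 2 := by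
  nlinarith [sq_nonneg (x - y)]

private lemma sq_le_four_aux {y g G : ℝ} (h1 : y ≤ 2 * g) (h2 : 0 ≤ y)
    (hG : g ^ 2 = G) : y ^ 2 ≤ 4 * G := by nlinarith

/-- The truncation threshold `T_ε := ε^{−2/(d−2)+δ}`. -/
def Ttrunc (d : ℕ) (ε δ : ℝ) : ℝ := ε ^ (-(2 / ((d : ℝ) - 2)) + δ)

/-- `Y_{ε} 1_{ρ < T_ε}` as a function of the mark:
`x ↦ x^{d−2} / (1 − 4^{d−2} ε² x^{d−2})` on `{x < T_ε}`, `0` otherwise. -/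
def Yind (d : ℕ) (ε δ : ℝ) : ℝ → ℝ :=
  Set.indicator {x | x < Ttrunc d ε δ}
    (fun x => x ^ ((d : ℝ) - 2) / (1 - 4 ^ ((d : ℝ) - 2) * ε ^ 2 * x ^ ((d : ℝ) - 2)))

set_option maxHeartbeats 4000000 in
/-- crude second-moment bound for the averaged truncated marks over an
arbitrary finite set `A ⊂ ℤ^d` with `#A ≤ k^d` (marks only identically distributed),
with `C = C(d)`. -/
theorem averaged_marks_boundary_second_moment (d : ℕ) (hd : 3 ≤ d) :
    ∃ C > 0, ∀ (δ β ε : ℝ) (k : ℕ),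
      δ ∈ Set.Ioc (0 : ℝ) (2 / ((d : ℝ) - 2)) → 0 < β →
      ε ∈ Set.Ioo (0 : ℝ) 1 →
      (4 : ℝ) ^ ((d : ℝ) - 2) * ε ^ (((d : ℝ) - 2) * δ) ≤ 1 / 2 →
      1 ≤ k →
      ∀ (A : Finset (Fin d → ℤ)), A.card ≤ k ^ d →
      ∀ (Ω : Type) (_ : MeasurableSpace Ω) (P : Measure Ω), IsProbabilityMeasure P →
      ∀ (ρ : (Fin d → ℤ) → Ω → ℝ),
        (∀ z, Measurable (ρ z)) →
        (∀ z ω, 0 ≤ ρ z ω) →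
        (∀ z, IdentDistrib (ρ z) (ρ 0) P P) →
        (∫⁻ ω, ENNReal.ofReal (ρ 0 ω ^ ((d : ℝ) - 2 + β)) ∂P ≤ 1) →
        ∫ ω, ((k : ℝ) ^ (-(d : ℝ)) * (∑ w ∈ A, Yind d ε δ (ρ w ω))
              - ∫ ω', ρ 0 ω' ^ ((d : ℝ) - 2) ∂P) ^ 2 ∂P
          ≤ C * ((∫ ω, Set.indicator {x | x < Ttrunc d ε δ}
                  (fun x => x ^ (2 * ((d : ℝ) - 2))) (ρ 0 ω) ∂P)
              + ε ^ (2 * (2 / ((d : ℝ) - 2) - δ) * β)) := by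
  refine ⟨12, by norm_num, ?_⟩
  intro δ β ε k hδ hβ hε hsmall hk A hA Ω mΩ P hP ρ hmeas hnn hid hmom
  obtain ⟨hδ0, hδ2⟩ := hδ
  obtain ⟨hε0, hε1⟩ := hε
  have hd2 : (1 : ℝ) ≤ (d : ℝ) - 2 := by
    have : (3 : ℝ) ≤ (d : ℝ) := by exact_mod_cast hd
    linarith
  have hd2pos : (0 : ℝ) < (d : ℝ) - 2 := by linarith
  have hd2ne : ((d : ℝ) - 2) ≠ 0 := ne_of_gt hd2pos
  set T : ℝ := Ttrunc d ε δ with hTdef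
  have hT1 : 1 ≤ T := by
    rw [hTdef, Ttrunc]
    refine Real.one_le_rpow_of_pos_of_le_one_of_nonpos hε0 hε1.le ?_
    have h2 : 2 / ((d : ℝ) - 2) > 0 := by positivity
    linarith
  have hT0 : (0 : ℝ) < T := lt_of_lt_of_le one_pos hT1
  -- power computations for T
  have hTpow : T ^ ((d : ℝ) - 2) = ε ^ (-2 + ((d : ℝ) - 2) * δ) := by
    rw [hTdef, Ttrunc, ← Real.rpow_mul hε0.le]
    congr 1
    field_simp
  have hεT : ε ^ 2 * T ^ ((d : ℝ) - 2) = ε ^ (((d : ℝ) - 2) * δ) := by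
    rw [hTpow, ← Real.rpow_natCast ε 2, ← Real.rpow_add hε0]
    congr 1
    push_cast
    ring
  -- the denominator is in [1/2, 1] on the truncation event
  have key : ∀ x : ℝ, 0 ≤ x → x < T →
      (4 : ℝ) ^ ((d : ℝ) - 2) * ε ^ 2 * x ^ ((d : ℝ) - 2) ≤ 1 / 2 := by
    intro x hx hxT
    have h4 : (0 : ℝ) ≤ (4 : ℝ) ^ ((d : ℝ) - 2) * ε ^ 2 := by positivity
    calc (4 : ℝ) ^ ((d : ℝ) - 2) * ε ^ 2 * x ^ ((d : ℝ) - 2)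
        ≤ (4 : ℝ) ^ ((d : ℝ) - 2) * ε ^ 2 * T ^ ((d : ℝ) - 2) := by
          exact mul_le_mul_of_nonneg_left
            (Real.rpow_le_rpow hx hxT.le hd2pos.le) h4
      _ = (4 : ℝ) ^ ((d : ℝ) - 2) * (ε ^ 2 * T ^ ((d : ℝ) - 2)) := by ring
      _ = (4 : ℝ) ^ ((d : ℝ) - 2) * ε ^ (((d : ℝ) - 2) * δ) := by rw [hεT]
      _ ≤ 1 / 2 := hsmall
  have hden : ∀ x : ℝ, 0 ≤ x → x < T →
      1 / 2 ≤ 1 - (4 : ℝ) ^ ((d : ℝ) - 2) * ε ^ 2 * x ^ ((d : ℝ) - 2) := by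
    intro x hx hxT
    have := key x hx hxT
    linarith
  -- the truncated functions g (first power) and G (second power)
  set g : ℝ → ℝ := Set.indicator {x | x < T} (fun x => x ^ ((d : ℝ) - 2)) with hgdef
  set G : ℝ → ℝ := Set.indicator {x | x < T} (fun x => x ^ (2 * ((d : ℝ) - 2))) with hGdef
  have hgnn : ∀ x : ℝ, 0 ≤ x → 0 ≤ g x := by
    intro x hx
    rw [hgdef]
    by_cases hxT : x < T
    · rw [ind_mem _ hxT]; exact Real.rpow_nonneg hx _
    · rw [ind_not_mem _ hxT]
  have hGnn : ∀ x : ℝ, 0 ≤ x → 0 ≤ G x := by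
    intro x hx
    rw [hGdef]
    by_cases hxT : x < T
    · rw [ind_mem _ hxT]; exact Real.rpow_nonneg hx _
    · rw [ind_not_mem _ hxT]
  have hgle : ∀ x : ℝ, 0 ≤ x → g x ≤ T ^ ((d : ℝ) - 2) := by
    intro x hx
    rw [hgdef]
    by_cases hxT : x < T
    · rw [ind_mem _ hxT]
      exact Real.rpow_le_rpow hx hxT.le hd2pos.le
    · rw [ind_not_mem _ hxT]
      exact Real.rpow_nonneg hT0.le _
  have hGle : ∀ x : ℝ, 0 ≤ x → G x ≤ T ^ (2 * ((d : ℝ) - 2)) := by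
    intro x hx
    rw [hGdef]
    by_cases hxT : x < T
    · rw [ind_mem _ hxT]
      exact Real.rpow_le_rpow hx hxT.le (by positivity)
    · rw [ind_not_mem _ hxT]
      exact Real.rpow_nonneg hT0.le _
  have hgsq : ∀ x : ℝ, 0 ≤ x → (g x) ^ 2 = G x := by
    intro x hx
    rw [hgdef, hGdef]
    by_cases hxT : x < T
    · rw [ind_mem _ hxT, ind_mem _ hxT]
      rw [← Real.rpow_natCast (x ^ ((d : ℝ) - 2)) 2, ← Real.rpow_mul hx]
      congr 1
      push_cast
      ring
    · rw [ind_not_mem _ hxT, ind_not_mem _ hxT]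
      norm_num
  -- basic facts on Yind
  have hYeq : Yind d ε δ = Set.indicator {x : ℝ | x < T}
      (fun x => x ^ ((d : ℝ) - 2) / (1 - 4 ^ ((d : ℝ) - 2) * ε ^ 2 * x ^ ((d : ℝ) - 2))) :=
    rfl
  have hYnn : ∀ x : ℝ, 0 ≤ x → 0 ≤ Yind d ε δ x := by
    intro x hx
    rw [hYeq]
    by_cases hxT : x < T
    · rw [ind_mem _ hxT]
      have := hden x hx hxT
      exact div_nonneg (Real.rpow_nonneg hx _) (by linarith)
    · rw [ind_not_mem _ hxT]
  have hYle : ∀ x : ℝ, 0 ≤ x → Yind d ε δ x ≤ 2 * g x := by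
    intro x hx
    rw [hYeq, hgdef]
    by_cases hxT : x < T
    · rw [ind_mem _ hxT, ind_mem _ hxT]
      have hD := hden x hx hxT
      have hDpos : (0 : ℝ) < 1 - (4 : ℝ) ^ ((d : ℝ) - 2) * ε ^ 2 * x ^ ((d : ℝ) - 2) := by
        linarith
      rw [div_le_iff₀ hDpos]
      have hxp : (0 : ℝ) ≤ x ^ ((d : ℝ) - 2) := Real.rpow_nonneg hx _
      have hmul := mul_le_mul_of_nonneg_left hD hxp
      linarith [hmul]
    · rw [ind_not_mem _ hxT, ind_not_mem _ hxT]
      norm_num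
  have hY2 : ∀ x : ℝ, 0 ≤ x → (Yind d ε δ x) ^ 2 ≤ 4 * G x := by
    intro x hx
    exact sq_le_four_aux (hYle x hx) (hYnn x hx) (hgsq x hx)
  have hYbd : ∀ x : ℝ, 0 ≤ x → Yind d ε δ x ≤ 2 * T ^ ((d : ℝ) - 2) := by
    intro x hx
    calc Yind d ε δ x ≤ 2 * g x := hYle x hx
      _ ≤ 2 * T ^ ((d : ℝ) - 2) := by
          have := hgle x hx; linarith
  -- measurability
  have hTset : MeasurableSet {x : ℝ | x < T} := measurableSet_Iio
  have measg : Measurable g := by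
    rw [hgdef]
    exact ((Real.continuous_rpow_const hd2pos.le).measurable).indicator hTset
  have measG : Measurable G := by
    rw [hGdef]
    exact ((Real.continuous_rpow_const (by positivity : (0:ℝ) ≤ 2 * ((d:ℝ)-2))).measurable).indicator hTset
  have measY : Measurable (Yind d ε δ) := by
    rw [hYeq]
    refine Measurable.indicator ?_ measurableSet_Iio
    exact ((Real.continuous_rpow_const hd2pos.le).measurable).div
      (measurable_const.sub
        (((Real.continuous_rpow_const hd2pos.le).measurable).const_mul _))
  -- integrability helper for bounded measurable functions
  have int_bdd : ∀ (f : Ω → ℝ) (c : ℝ), Measurable f → (∀ ω, |f ω| ≤ c) →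
      Integrable f P := by
    intro f c hf hb
    exact ⟨hf.aestronglyMeasurable,
      HasFiniteIntegral.of_bounded (C := c)
        (Filter.Eventually.of_forall fun ω => by simpa [Real.norm_eq_abs] using hb ω)⟩
  -- the Y random variables
  set Y : (Fin d → ℤ) → Ω → ℝ := fun w ω => Yind d ε δ (ρ w ω) with hYdef
  set B : ℝ := 2 * T ^ ((d : ℝ) - 2) with hBdef
  have hB0 : 0 ≤ B := by rw [hBdef]; positivity
  have hYwb : ∀ w ω, |Y w ω| ≤ B := by
    intro w ω
    rw [abs_of_nonneg (hYnn _ (hnn w ω))]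
    exact hYbd _ (hnn w ω)
  have measYw : ∀ w, Measurable (Y w) := fun w => measY.comp (hmeas w)
  have intY2 : ∀ w, Integrable (fun ω => (Y w ω) ^ 2) P := by
    intro w
    refine int_bdd _ (B ^ 2) ((measYw w).pow_const 2) ?_
    intro ω
    rw [abs_of_nonneg (sq_nonneg _), ← sq_abs]
    exact pow_le_pow_left₀ (abs_nonneg _) (hYwb w ω) 2
  have identY2 : ∀ w, ∫ ω, (Y w ω) ^ 2 ∂P = ∫ ω, (Y 0 ω) ^ 2 ∂P := by
    intro w
    exact ((hid w).comp (measY.pow_const 2)).integral_eq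
  -- M2 and its facts
  set M2 : ℝ := ∫ ω, G (ρ 0 ω) ∂P with hM2def
  have intG : Integrable (fun ω => G (ρ 0 ω)) P := by
    refine int_bdd _ (T ^ (2 * ((d : ℝ) - 2))) (measG.comp (hmeas 0)) ?_
    intro ω
    rw [abs_of_nonneg (hGnn _ (hnn 0 ω))]
    exact hGle _ (hnn 0 ω)
  have hM2nn : 0 ≤ M2 := integral_nonneg fun ω => hGnn _ (hnn 0 ω)
  have hY0sq : ∫ ω, (Y 0 ω) ^ 2 ∂P ≤ 4 * M2 := by
    have h := integral_mono (intY2 0) (intG.const_mul 4)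
      (fun ω => hY2 _ (hnn 0 ω))
    rwa [integral_const_mul] at h
  have hY0sqnn : 0 ≤ ∫ ω, (Y 0 ω) ^ 2 ∂P := integral_nonneg fun ω => sq_nonneg _
  -- the moment function
  set fβ : Ω → ℝ := fun ω => ρ 0 ω ^ ((d : ℝ) - 2 + β) with hfβdef
  have measfβ : Measurable fβ := by
    rw [hfβdef]
    exact (Real.continuous_rpow_const (by linarith : (0:ℝ) ≤ (d:ℝ) - 2 + β)).measurable.comp (hmeas 0)
  have hfβnn : ∀ ω, 0 ≤ fβ ω := fun ω => Real.rpow_nonneg (hnn 0 ω) _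
  have intfβ : Integrable fβ P := by
    refine ⟨measfβ.aestronglyMeasurable, ?_⟩
    rw [hasFiniteIntegral_iff_ofReal (Filter.Eventually.of_forall hfβnn)]
    exact lt_of_le_of_lt hmom ENNReal.one_lt_top
  have hIβ : ∫ ω, fβ ω ∂P ≤ 1 := by
    rw [integral_eq_lintegral_of_nonneg_ae (Filter.Eventually.of_forall hfβnn)
      measfβ.aestronglyMeasurable]
    calc (∫⁻ ω, ENNReal.ofReal (fβ ω) ∂P).toReal
        ≤ (1 : ENNReal).toReal := ENNReal.toReal_mono ENNReal.one_ne_top hmom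
      _ = 1 := by simp
  -- integrability of ρ^{d-2}
  have hρpow_le : ∀ ω, ρ 0 ω ^ ((d : ℝ) - 2) ≤ 1 + fβ ω := by
    intro ω
    rcases le_or_gt (ρ 0 ω) 1 with h1 | h1
    · have : ρ 0 ω ^ ((d : ℝ) - 2) ≤ 1 :=
        Real.rpow_le_one (hnn 0 ω) h1 hd2pos.le
      have := hfβnn ω
      linarith
    · have : ρ 0 ω ^ ((d : ℝ) - 2) ≤ fβ ω := by
        rw [hfβdef]
        exact Real.rpow_le_rpow_of_exponent_le h1.le (by linarith)
      linarith
  have measρd2 : Measurable (fun ω => ρ 0 ω ^ ((d : ℝ) - 2)) :=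
    (Real.continuous_rpow_const hd2pos.le).measurable.comp (hmeas 0)
  have intρd2 : Integrable (fun ω => ρ 0 ω ^ ((d : ℝ) - 2)) P := by
    refine Integrable.mono' ((integrable_const (1:ℝ)).add intfβ)
      measρd2.aestronglyMeasurable ?_
    refine Filter.Eventually.of_forall fun ω => ?_
    rw [Real.norm_eq_abs, abs_of_nonneg (Real.rpow_nonneg (hnn 0 ω) _)]
    exact hρpow_le ω
  set m : ℝ := ∫ ω', ρ 0 ω' ^ ((d : ℝ) - 2) ∂P with hmdef
  -- split m into truncated part a and tail part b
  set h1f : Ω → ℝ := fun ω => g (ρ 0 ω) with hh1def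
  have inth1 : Integrable h1f P := by
    refine int_bdd _ (T ^ ((d : ℝ) - 2)) (measg.comp (hmeas 0)) ?_
    intro ω
    rw [hh1def, abs_of_nonneg (hgnn _ (hnn 0 ω))]
    exact hgle _ (hnn 0 ω)
  have inth1sq : Integrable (fun ω => (h1f ω) ^ 2) P := by
    refine int_bdd _ ((T ^ ((d : ℝ) - 2)) ^ 2) ((measg.comp (hmeas 0)).pow_const 2) ?_
    intro ω
    rw [abs_of_nonneg (sq_nonneg _), ← sq_abs, hh1def]
    refine pow_le_pow_left₀ (abs_nonneg _) ?_ 2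
    rw [abs_of_nonneg (hgnn _ (hnn 0 ω))]
    exact hgle _ (hnn 0 ω)
  set a : ℝ := ∫ ω, h1f ω ∂P with hadef
  have hann : 0 ≤ a := integral_nonneg fun ω => hgnn _ (hnn 0 ω)
  have hh1sqG : (fun ω => (h1f ω) ^ 2) = fun ω => G (ρ 0 ω) :=
    funext fun ω => hgsq _ (hnn 0 ω)
  have ha2 : a ^ 2 ≤ M2 := by
    have h0 : 0 ≤ ∫ ω, (h1f ω - a) ^ 2 ∂P := integral_nonneg fun ω => sq_nonneg _
    have hexp : ∫ ω, (h1f ω - a) ^ 2 ∂P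
        = (∫ ω, (h1f ω) ^ 2 ∂P) - 2 * a * a + a ^ 2 := by
      have heq : (fun ω => (h1f ω - a) ^ 2)
          = fun ω => ((h1f ω) ^ 2 - 2 * a * h1f ω) + a ^ 2 :=
        funext fun ω => by ring
      have intmul : Integrable (fun ω => 2 * a * h1f ω) P := inth1.const_mul (2 * a)
      have intsub : Integrable (fun ω => (h1f ω) ^ 2 - 2 * a * h1f ω) P := inth1sq.sub intmul
      rw [heq, integral_add intsub (integrable_const _),
        integral_sub inth1sq intmul, integral_const_mul, integral_const]
      simp [← hadef]
    rw [hexp, hh1sqG, ← hM2def] at h0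
    ring_nf at h0 ⊢
    linarith
  -- tail part
  set h2f : Ω → ℝ := fun ω => ρ 0 ω ^ ((d : ℝ) - 2) - h1f ω with hh2def
  have hh2nn : ∀ ω, 0 ≤ h2f ω := by
    intro ω
    simp only [hh2def, hh1def, hgdef]
    by_cases hxT : ρ 0 ω < T
    · rw [ind_mem _ hxT]; simp
    · rw [ind_not_mem _ hxT]
      simpa using Real.rpow_nonneg (hnn 0 ω) _
  have hh2le : ∀ ω, h2f ω ≤ T ^ (-β) * fβ ω := by
    intro ω
    have hx : 0 ≤ ρ 0 ω := hnn 0 ω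
    simp only [hh2def, hh1def, hgdef]
    by_cases hxT : ρ 0 ω < T
    · rw [ind_mem _ hxT]
      have : (0:ℝ) ≤ T ^ (-β) * fβ ω :=
        mul_nonneg (Real.rpow_nonneg hT0.le _) (hfβnn ω)
      simp only [sub_self]
      linarith
    · rw [ind_not_mem _ hxT]
      have hTx : T ≤ ρ 0 ω := not_lt.1 hxT
      have hxpos : 0 < ρ 0 ω := lt_of_lt_of_le hT0 hTx
      have hsplit : fβ ω = ρ 0 ω ^ ((d : ℝ) - 2) * ρ 0 ω ^ β := by
        rw [hfβdef, ← Real.rpow_add hxpos]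
      have hTβpos : 0 < T ^ β := Real.rpow_pos_of_pos hT0 _
      have hβle : T ^ β ≤ ρ 0 ω ^ β := Real.rpow_le_rpow hT0.le hTx hβ.le
      have hone : 1 ≤ T ^ (-β) * ρ 0 ω ^ β := by
        rw [Real.rpow_neg hT0.le]
        calc (1:ℝ) = (T ^ β)⁻¹ * T ^ β := by
              field_simp
          _ ≤ (T ^ β)⁻¹ * ρ 0 ω ^ β := by
              exact mul_le_mul_of_nonneg_left hβle (by positivity)
      calc ρ 0 ω ^ ((d : ℝ) - 2) - 0 = ρ 0 ω ^ ((d : ℝ) - 2) * 1 := by ring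
        _ ≤ ρ 0 ω ^ ((d : ℝ) - 2) * (T ^ (-β) * ρ 0 ω ^ β) :=
            mul_le_mul_of_nonneg_left hone (Real.rpow_nonneg hx _)
        _ = T ^ (-β) * fβ ω := by rw [hsplit]; ring
  have inth2 : Integrable h2f P := intρd2.sub inth1
  set b : ℝ := ∫ ω, h2f ω ∂P with hbdef
  have hbnn : 0 ≤ b := integral_nonneg hh2nn
  have hble : b ≤ T ^ (-β) := by
    calc b ≤ ∫ ω, T ^ (-β) * fβ ω ∂P := integral_mono inth2 (intfβ.const_mul _) hh2le
      _ = T ^ (-β) * ∫ ω, fβ ω ∂P := integral_const_mul _ _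
      _ ≤ T ^ (-β) * 1 :=
          mul_le_mul_of_nonneg_left hIβ (Real.rpow_nonneg hT0.le _)
      _ = T ^ (-β) := mul_one _
  have hmab : m = a + b := by
    rw [hbdef, hmdef, hadef]
    rw [show h2f = fun ω => ρ 0 ω ^ ((d : ℝ) - 2) - h1f ω from rfl]
    rw [integral_sub intρd2 inth1]
    ring
  -- the epsilon term
  set Eps : ℝ := ε ^ (2 * (2 / ((d : ℝ) - 2) - δ) * β) with hEpsdef
  have hEpsnn : 0 ≤ Eps := Real.rpow_nonneg hε0.le _
  have hTβsq : (T ^ (-β)) ^ 2 = Eps := by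
    rw [hTdef, Ttrunc, ← Real.rpow_mul hε0.le,
      ← Real.rpow_natCast (ε ^ ((-(2 / ((d : ℝ) - 2)) + δ) * (-β))) 2,
      ← Real.rpow_mul hε0.le, hEpsdef]
    congr 1
    push_cast
    ring
  have hb2 : b ^ 2 ≤ Eps := by
    rw [← hTβsq]
    exact pow_le_pow_left₀ hbnn hble 2
  have hm2 : m ^ 2 ≤ 2 * M2 + 2 * Eps := by
    have h2ab : m ^ 2 ≤ 2 * a ^ 2 + 2 * b ^ 2 := by
      rw [hmab]; exact sq_add_le_aux a b
    linarith
  have hmnn : 0 ≤ m :=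
    integral_nonneg fun ω => Real.rpow_nonneg (hnn 0 ω) _
  -- the averaging constant
  set c : ℝ := (k : ℝ) ^ (-(d : ℝ)) with hcdef
  have hkpos : (0 : ℝ) < (k : ℝ) := by exact_mod_cast hk
  have hkd : (0 : ℝ) < (k : ℝ) ^ d := pow_pos hkpos d
  have hc : c = ((k : ℝ) ^ d)⁻¹ := by
    rw [hcdef, Real.rpow_neg hkpos.le, Real.rpow_natCast]
  have hc0 : 0 < c := by rw [hc]; positivity
  have hcard : (A.card : ℝ) ≤ (k : ℝ) ^ d := by
    exact_mod_cast hA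
  have hcc : c ^ 2 * (A.card : ℝ) ≤ c := by
    calc c ^ 2 * (A.card : ℝ) ≤ c ^ 2 * (k : ℝ) ^ d :=
          mul_le_mul_of_nonneg_left hcard (sq_nonneg c)
      _ = c := by rw [hc]; field_simp
  have hccard : c * (A.card : ℝ) ≤ 1 := by
    calc c * (A.card : ℝ) ≤ c * (k : ℝ) ^ d :=
          mul_le_mul_of_nonneg_left hcard hc0.le
      _ = 1 := by rw [hc]; field_simp
  -- pointwise bound on the integrand
  set S : Ω → ℝ := fun ω => c * ∑ w ∈ A, Y w ω with hSdef
  have ptw : ∀ ω, (S ω - m) ^ 2 ≤ 2 * c * (∑ w ∈ A, (Y w ω) ^ 2) + 2 * m ^ 2 := by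
    intro ω
    have hq : 0 ≤ ∑ w ∈ A, (Y w ω) ^ 2 :=
      Finset.sum_nonneg fun w _ => sq_nonneg _
    have hs2 : (∑ w ∈ A, Y w ω) ^ 2 ≤ (A.card : ℝ) * ∑ w ∈ A, (Y w ω) ^ 2 :=
      sq_sum_le_card_mul_sum_sq
    have h1 : (S ω - m) ^ 2 ≤ 2 * (S ω) ^ 2 + 2 * m ^ 2 := sq_sub_le_aux (S ω) m
    have h2 : (S ω) ^ 2 = c ^ 2 * (∑ w ∈ A, Y w ω) ^ 2 := by rw [hSdef]; ring
    have h3 : c ^ 2 * (∑ w ∈ A, Y w ω) ^ 2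
        ≤ c ^ 2 * ((A.card : ℝ) * ∑ w ∈ A, (Y w ω) ^ 2) :=
      mul_le_mul_of_nonneg_left hs2 (sq_nonneg c)
    have h5 : (c ^ 2 * (A.card : ℝ)) * (∑ w ∈ A, (Y w ω) ^ 2)
        ≤ c * (∑ w ∈ A, (Y w ω) ^ 2) := mul_le_mul_of_nonneg_right hcc hq
    have h4 : c ^ 2 * ((A.card : ℝ) * ∑ w ∈ A, (Y w ω) ^ 2)
        = (c ^ 2 * (A.card : ℝ)) * (∑ w ∈ A, (Y w ω) ^ 2) := by ring
    linarith [h1, h2, h3, h4, h5]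
  -- integrability of both sides
  have measS : Measurable S := by
    rw [hSdef]
    exact (Finset.measurable_sum A fun w _ => measYw w).const_mul _
  have hSbd : ∀ ω, |S ω - m| ≤ c * ((A.card : ℝ) * B) + |m| := by
    intro ω
    have hsum_nn : 0 ≤ ∑ w ∈ A, Y w ω :=
      Finset.sum_nonneg fun w _ => hYnn _ (hnn w ω)
    have hsum_le : ∑ w ∈ A, Y w ω ≤ (A.card : ℝ) * B := by
      calc ∑ w ∈ A, Y w ω ≤ ∑ _w ∈ A, B :=
            Finset.sum_le_sum fun w _ => by
              have := hYwb w ω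
              exact (abs_le.1 this).2
        _ = (A.card : ℝ) * B := by rw [Finset.sum_const, nsmul_eq_mul]
    calc |S ω - m| ≤ |S ω| + |m| := abs_sub _ _
      _ ≤ c * ((A.card : ℝ) * B) + |m| := by
          have : |S ω| ≤ c * ((A.card : ℝ) * B) := by
            rw [hSdef]
            rw [abs_of_nonneg (mul_nonneg hc0.le hsum_nn)]
            exact mul_le_mul_of_nonneg_left hsum_le hc0.le
          linarith
  have intLHS : Integrable (fun ω => (S ω - m) ^ 2) P := by
    refine int_bdd _ ((c * ((A.card : ℝ) * B) + |m|) ^ 2)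
      ((measS.sub measurable_const).pow_const 2) ?_
    intro ω
    rw [abs_of_nonneg (sq_nonneg _), ← sq_abs]
    exact pow_le_pow_left₀ (abs_nonneg _) (hSbd ω) 2
  have intYsqsum : Integrable (fun ω => ∑ w ∈ A, (Y w ω) ^ 2) P :=
    integrable_finset_sum A fun w _ => intY2 w
  have intRHS : Integrable
      (fun ω => 2 * c * (∑ w ∈ A, (Y w ω) ^ 2) + 2 * m ^ 2) P :=
    (intYsqsum.const_mul (2 * c)).add (integrable_const _)
  -- main chain
  have main : ∫ ω, (S ω - m) ^ 2 ∂P ≤ 12 * (M2 + Eps) := by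
    have step1 : ∫ ω, (S ω - m) ^ 2 ∂P
        ≤ ∫ ω, (2 * c * (∑ w ∈ A, (Y w ω) ^ 2) + 2 * m ^ 2) ∂P :=
      integral_mono intLHS intRHS ptw
    have step2 : ∫ ω, (2 * c * (∑ w ∈ A, (Y w ω) ^ 2) + 2 * m ^ 2) ∂P
        = 2 * c * ((A.card : ℝ) * ∫ ω, (Y 0 ω) ^ 2 ∂P) + 2 * m ^ 2 := by
      rw [integral_add (intYsqsum.const_mul (2 * c)) (integrable_const _),
        integral_const_mul, integral_finset_sum A fun w _ => intY2 w,
        integral_const]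
      simp only [measure_univ, probReal_univ, ENNReal.toReal_one, smul_eq_mul, one_mul]
      congr 2
      calc ∑ w ∈ A, ∫ ω, (Y w ω) ^ 2 ∂P
          = ∑ _w ∈ A, ∫ ω, (Y 0 ω) ^ 2 ∂P :=
            Finset.sum_congr rfl fun w _ => identY2 w
        _ = (A.card : ℝ) * ∫ ω, (Y 0 ω) ^ 2 ∂P := by
            rw [Finset.sum_const, nsmul_eq_mul]
    have step3 : 2 * c * ((A.card : ℝ) * ∫ ω, (Y 0 ω) ^ 2 ∂P)
        ≤ 2 * ∫ ω, (Y 0 ω) ^ 2 ∂P := by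
      have : c * (A.card : ℝ) * ∫ ω, (Y 0 ω) ^ 2 ∂P
          ≤ 1 * ∫ ω, (Y 0 ω) ^ 2 ∂P :=
        mul_le_mul_of_nonneg_right hccard hY0sqnn
      have heq2 : 2 * c * ((A.card : ℝ) * ∫ ω, (Y 0 ω) ^ 2 ∂P)
          = 2 * (c * (A.card : ℝ) * ∫ ω, (Y 0 ω) ^ 2 ∂P) := by ring
      linarith [this, heq2]
    calc ∫ ω, (S ω - m) ^ 2 ∂P
        ≤ 2 * c * ((A.card : ℝ) * ∫ ω, (Y 0 ω) ^ 2 ∂P) + 2 * m ^ 2 := by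
          rw [← step2]; exact step1
      _ ≤ 2 * ∫ ω, (Y 0 ω) ^ 2 ∂P + 2 * m ^ 2 := by linarith
      _ ≤ 2 * (4 * M2) + 2 * (2 * M2 + 2 * Eps) := by
          linarith [hY0sq, hm2]
      _ = 12 * M2 + 4 * Eps := by ring
      _ ≤ 12 * (M2 + Eps) := by linarith
  exact main
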